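/- arXiv:2312.11657 — 4 statements merged into one kernel-verified Lean document; each statement's English description precedes it below -/
import Mathlib

section
/- Let λ ∈ Y_m be a partition and γ ∈ (Z_{≥0})^k a composition with γ_i > γ_{i+1} for some 1 ≤ i < k. Define c_j = #{r : λ_r ≥ γ_j + 1} + #{r > j : γ_r = γ_j} + #{r : γ_r > γ_j} for each j. Let u = (m+i, γ_{i+1}+1) be a box in the diagram of the concatenated composition (λ⁻ | γ), where λ⁻ is the weakly increasing rearrangement of λ. Then c_{i+1} - c_i = a(u), where a(u) = #{r : γ_i ≥ λ_r ≥ γ_{i+1}+1} + #{r < i : γ_i ≥ γ_r ≥ γ_{i+1}+1} + #{r > i+1 : γ_i > γ_r ≥ γ_{i+1}} + 1 is the arm length of u in dg(λ⁻ | γ). -/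
/-!
STATEMENT 5: Let `λ ∈ Y_m` be a partition and `γ ∈ (ℤ_{≥0})^k` with `γ_i > γ_{i+1}`.
With `c_j = #{r : λ_r ≥ γ_j+1} + #{r > j : γ_r = γ_j} + #{r : γ_r > γ_j}` and
`u = (m+i, γ_{i+1}+1)` the box in the diagram of `(λ⁻ | γ)`, one has
`c_{i+1} - c_i = a(u)`, where
`a(u) = #{r : γ_i ≥ λ_r ≥ γ_{i+1}+1} + #{r < i : γ_i ≥ γ_r ≥ γ_{i+1}+1}
        + #{r > i+1 : γ_i > γ_r ≥ γ_{i+1}} + 1`.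
-/

open Finset

/-- `c_j` of the bijection of Carlsson–Gorsky–Mellit. -/
def cWt {m k : ℕ} (lam : Fin m → ℕ) (gam : Fin k → ℕ) (j : Fin k) : ℕ :=
  (univ.filter (fun r : Fin m => gam j + 1 ≤ lam r)).card
    + (univ.filter (fun r : Fin k => j < r ∧ gam r = gam j)).card
    + (univ.filter (fun r : Fin k => gam j < gam r)).card

/-- Pointwise indicator identity on the `γ` part. -/
lemma key_ptwise (i rv x y z : ℕ) (hzy : z < y)
    (h1 : rv = i → x = y) (h2 : rv = i + 1 → x = z) :
    ((if i + 1 < rv ∧ x = z then (1:ℤ) else 0) + (if z < x then 1 else 0))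
      - ((if i < rv ∧ x = y then 1 else 0) + (if y < x then 1 else 0))
    = (if rv < i ∧ z + 1 ≤ x ∧ x ≤ y then 1 else 0)
        + (if i + 1 < rv ∧ z ≤ x ∧ x < y then 1 else 0)
        + (if rv = i then 1 else 0) := by
  rcases Nat.lt_trichotomy rv i with h | h | h
  · split_ifs <;> omega
  · have hx := h1 h
    split_ifs <;> omega
  · rcases Nat.lt_or_ge (i + 1) rv with h' | h'
    · split_ifs <;> omega
    · have hr : rv = i + 1 := by omega
      have hx := h2 hr
      split_ifs <;> omega

theorem arm_eq_weight_difference {m k : ℕ} (lam : Fin m → ℕ) (gam : Fin k → ℕ)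
    (hlam : Antitone lam) (i : Fin k) (hi : (i : ℕ) + 1 < k)
    (hgam : gam ⟨(i : ℕ) + 1, hi⟩ < gam i) :
    (cWt lam gam ⟨(i : ℕ) + 1, hi⟩ : ℤ) - cWt lam gam i =
      ((univ.filter (fun r : Fin m =>
          gam ⟨(i : ℕ) + 1, hi⟩ + 1 ≤ lam r ∧ lam r ≤ gam i)).card
        + (univ.filter (fun r : Fin k =>
            r < i ∧ gam ⟨(i : ℕ) + 1, hi⟩ + 1 ≤ gam r ∧ gam r ≤ gam i)).card
        + (univ.filter (fun r : Fin k =>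
            ((i : ℕ) + 1 : ℕ) < (r : ℕ) ∧ gam ⟨(i : ℕ) + 1, hi⟩ ≤ gam r ∧
              gam r < gam i)).card
        + 1 : ℕ) := by
  set i' : Fin k := ⟨(i : ℕ) + 1, hi⟩ with hi'
  set z := gam i' with hz
  set y := gam i with hy
  -- the λ-part
  have hm : ((univ.filter (fun r : Fin m => z + 1 ≤ lam r)).card : ℤ)
      - ((univ.filter (fun r : Fin m => y + 1 ≤ lam r)).card : ℤ)
      = ((univ.filter (fun r : Fin m => z + 1 ≤ lam r ∧ lam r ≤ y)).card : ℤ) := by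
    rw [Finset.card_filter, Finset.card_filter, Finset.card_filter]
    push_cast
    rw [← Finset.sum_sub_distrib]
    refine Finset.sum_congr rfl fun r _ => ?_
    split_ifs <;> omega
  -- the γ-part
  have hk : ((univ.filter (fun r : Fin k => i' < r ∧ gam r = z)).card : ℤ)
        + ((univ.filter (fun r : Fin k => z < gam r)).card : ℤ)
        - (((univ.filter (fun r : Fin k => i < r ∧ gam r = y)).card : ℤ)
          + ((univ.filter (fun r : Fin k => y < gam r)).card : ℤ))
      = ((univ.filter (fun r : Fin k => r < i ∧ z + 1 ≤ gam r ∧ gam r ≤ y)).card : ℤ)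
        + ((univ.filter (fun r : Fin k =>
            ((i : ℕ) + 1 : ℕ) < (r : ℕ) ∧ z ≤ gam r ∧ gam r < y)).card : ℤ)
        + 1 := by
    have h1 : (1 : ℤ) = ∑ r : Fin k, if r = i then (1:ℤ) else 0 := by
      rw [Finset.sum_ite_eq' Finset.univ i (fun _ => (1:ℤ))]
      simp
    rw [Finset.card_filter, Finset.card_filter, Finset.card_filter,
      Finset.card_filter, Finset.card_filter, Finset.card_filter, h1]
    push_cast
    rw [← Finset.sum_add_distrib, ← Finset.sum_add_distrib, ← Finset.sum_sub_distrib,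
      ← Finset.sum_add_distrib, ← Finset.sum_add_distrib]
    refine Finset.sum_congr rfl fun r _ => ?_
    have := key_ptwise (i : ℕ) (r : ℕ) (gam r) y z hgam
      (fun h => by rw [show r = i from Fin.ext h])
      (fun h => by rw [hz, show r = i' from Fin.ext h])
    simp only [Fin.lt_def, Fin.ext_iff, hi'] at this ⊢
    linarith [this]
  simp only [cWt]
  push_cast
  rw [← hz, ← hy]
  linarith [hm, hk]
end

section
/- With λ a partition, γ a composition with γ_i > γ_{i+1}, weights w_j = q^{γ_j} t^{c_j} where c_j = #{r : λ_r ≥ γ_j+1} + #{r > j : γ_r = γ_j} + #{r : γ_r > γ_j}, and u = (m+i, γ_{i+1}+1) the box in dg(λ⁻ | γ), one has w_i / w_{i+1} = q^{l(u)+1} t^{-a(u)}, where l and a are the leg and arm lengths of u in dg(λ⁻ | γ). -/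
/-!
STATEMENT 6: With `λ` a partition, `γ` a composition with `γ_i > γ_{i+1}`, weights
`w_j = q^{γ_j} t^{c_j}` where
`c_j = #{r : λ_r ≥ γ_j+1} + #{r > j : γ_r = γ_j} + #{r : γ_r > γ_j}`,
and `u = (m+i, γ_{i+1}+1)` the box in `dg(λ⁻|γ)`, one has
`w_i / w_{i+1} = q^{l(u)+1} t^{-a(u)}`, with leg `l(u) = γ_i - (γ_{i+1}+1)` and arm
`a(u) = #{r : γ_i ≥ λ_r ≥ γ_{i+1}+1} + #{r < i : γ_i ≥ γ_r ≥ γ_{i+1}+1}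
        + #{r > i+1 : γ_i > γ_r ≥ γ_{i+1}} + 1`.
-/

open Finset

/-- Arm of the box `u = (m+i, γ_{i+1}+1)` in `dg(λ⁻|γ)` (computed as in the paper). -/
def armU {m k : ℕ} (lam : Fin m → ℕ) (gam : Fin k → ℕ) (i : Fin k)
    (hi : (i : ℕ) + 1 < k) : ℕ :=
  (univ.filter (fun r : Fin m =>
      gam ⟨(i : ℕ) + 1, hi⟩ + 1 ≤ lam r ∧ lam r ≤ gam i)).card
    + (univ.filter (fun r : Fin k =>
        r < i ∧ gam ⟨(i : ℕ) + 1, hi⟩ + 1 ≤ gam r ∧ gam r ≤ gam i)).card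
    + (univ.filter (fun r : Fin k =>
        ((i : ℕ) + 1 : ℕ) < (r : ℕ) ∧ gam ⟨(i : ℕ) + 1, hi⟩ ≤ gam r ∧
          gam r < gam i)).card
    + 1


lemma cWt_succ_eq {m k : ℕ} (lam : Fin m → ℕ) (gam : Fin k → ℕ)
    (i : Fin k) (hi : (i : ℕ) + 1 < k) (hgam : gam ⟨(i : ℕ) + 1, hi⟩ < gam i) :
    cWt lam gam ⟨(i : ℕ) + 1, hi⟩ = cWt lam gam i + armU lam gam i hi := by
  unfold cWt armU
  have hm : (univ.filter (fun r : Fin m => gam ⟨(i : ℕ) + 1, hi⟩ + 1 ≤ lam r)).card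
      = (univ.filter (fun r : Fin m => gam i + 1 ≤ lam r)).card
        + (univ.filter (fun r : Fin m =>
            gam ⟨(i : ℕ) + 1, hi⟩ + 1 ≤ lam r ∧ lam r ≤ gam i)).card := by
    simp only [card_filter]
    rw [← Finset.sum_add_distrib]
    refine Finset.sum_congr rfl fun r _ => ?_
    split_ifs <;> omega
  have h1 : (1 : ℕ) = (univ.filter (fun r : Fin k => r = i)).card := by
    rw [Finset.filter_eq']; simp
  have hk : (univ.filter (fun r : Fin k =>
          (⟨(i : ℕ) + 1, hi⟩ : Fin k) < r ∧ gam r = gam ⟨(i : ℕ) + 1, hi⟩)).card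
        + (univ.filter (fun r : Fin k => gam ⟨(i : ℕ) + 1, hi⟩ < gam r)).card
      = (univ.filter (fun r : Fin k => i < r ∧ gam r = gam i)).card
        + (univ.filter (fun r : Fin k => gam i < gam r)).card
        + (univ.filter (fun r : Fin k =>
            r < i ∧ gam ⟨(i : ℕ) + 1, hi⟩ + 1 ≤ gam r ∧ gam r ≤ gam i)).card
        + (univ.filter (fun r : Fin k =>
            ((i : ℕ) + 1 : ℕ) < (r : ℕ) ∧ gam ⟨(i : ℕ) + 1, hi⟩ ≤ gam r ∧
              gam r < gam i)).card
        + (univ.filter (fun r : Fin k => r = i)).card := by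
    simp only [card_filter]
    rw [← Finset.sum_add_distrib, ← Finset.sum_add_distrib, ← Finset.sum_add_distrib,
      ← Finset.sum_add_distrib, ← Finset.sum_add_distrib]
    refine Finset.sum_congr rfl fun r _ => ?_
    have e1 : ((⟨(i : ℕ) + 1, hi⟩ : Fin k) < r) ↔ (i : ℕ) + 1 < (r : ℕ) := Iff.rfl
    have e3 : (r = i) ↔ (r : ℕ) = (i : ℕ) := Fin.ext_iff
    have e4 : (i < r) ↔ (i : ℕ) < (r : ℕ) := Iff.rfl
    have e5 : (r < i) ↔ (r : ℕ) < (i : ℕ) := Iff.rfl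
    simp only [e1, e3, e4, e5]
    by_cases h1 : (r : ℕ) = (i : ℕ)
    · have hgr : gam r = gam i := congrArg gam (Fin.ext h1)
      split_ifs <;> omega
    · by_cases h2 : (r : ℕ) = (i : ℕ) + 1
      · have hgr : gam r = gam ⟨(i : ℕ) + 1, hi⟩ := congrArg gam (Fin.ext h2)
        split_ifs <;> omega
      · split_ifs <;> omega
  omega

lemma weight_ratio_aux {K : Type*} [Field K] (q t : K) (hq : q ≠ 0) (ht : t ≠ 0)
    (A B C R E : ℕ) (hA : A = B + E) :
    (q ^ A * t ^ C) / (q ^ B * t ^ (C + R)) = q ^ E * t ^ (-(R : ℤ)) := by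
  rw [zpow_neg, zpow_natCast, hA, pow_add, pow_add]
  field_simp

theorem weight_ratio {K : Type*} [Field K] (q t : K) (hq : q ≠ 0) (ht : t ≠ 0)
    {m k : ℕ} (lam : Fin m → ℕ) (gam : Fin k → ℕ) (hlam : Antitone lam)
    (i : Fin k) (hi : (i : ℕ) + 1 < k) (hgam : gam ⟨(i : ℕ) + 1, hi⟩ < gam i) :
    (q ^ gam i * t ^ cWt lam gam i) /
        (q ^ gam ⟨(i : ℕ) + 1, hi⟩ * t ^ cWt lam gam ⟨(i : ℕ) + 1, hi⟩) =
      q ^ ((gam i - (gam ⟨(i : ℕ) + 1, hi⟩ + 1)) + 1) *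
        t ^ (-(armU lam gam i hi : ℤ)) := by
  rw [cWt_succ_eq lam gam i hi hgam]
  exact weight_ratio_aux q t hq ht _ _ _ _ _ (by omega)
end

section
/- The map φ sending a pair (μ, w) — where μ is a partition and w = (w_1,...,w_k) records the T-weights of an ordered removal of a horizontal strip of k boxes from μ, each box being at the top of its column — to the pair (λ | γ), where γ_i is the row coordinate of the box with weight w_i and λ is the transpose of the partition obtained from μ by removing all columns containing a removed box, is a bijection from the set of such pairs (μ,w) with |μ| = n onto the set of pairs (λ, γ) ∈ Y × (Z_{≥0})^k with |λ| + |γ| = n - k. -/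
/-!
STATEMENT 7: The Carlsson–Gorsky–Mellit bijection `φ`.

A `T`-fixed point of `PFH_{n,n-k}` is encoded by the column heights
`col : ℕ → ℕ` (an antitone, finitely supported function with total sum `n`;
`col c` is the height of column `c` of the partition `μ`) together with the columns
`box : Fin k → ℕ` of the `k` removed boxes (removed in the order `i = 0,1,…`).  The
removed boxes form a horizontal strip (distinct columns) with each box topmost in its
column, and each intermediate shape (after removing the first `j` boxes) must again be
a partition.  The `i`-th removed box sits at column `box i`, row `col (box i) - 1`
(0-indexed), so its weight is `w_i = q^{col (box i) - 1} t^{box i}`.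

The map `φ` sends such a pair to `(λ | γ)` where `γ_i` is the row coordinate of the
`i`-th removed box and `λ` is the transpose of the partition obtained from `μ` by
deleting every column containing a removed box; thus `λ_j = #{untouched columns of
height ≥ j}`.  The claim: `φ` is a bijection onto the pairs `(λ, γ)` with `λ` a
partition, `γ ∈ (ℤ_{≥0})^k`, and `|λ| + |γ| = n - k`.
-/

open Finset

lemma ncardIio (a : ℕ) : (Set.Iio a).ncard = a := by
  rw [show Set.Iio a = ↑(Finset.range a) by ext; simp, Set.ncard_coe_finset, Finset.card_range]

lemma ncard_setOf_fin {k : ℕ} (P : Fin k → Prop) [DecidablePred P] :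
    {i : Fin k | P i}.ncard = (univ.filter P).card := by
  rw [Set.ncard_eq_toFinset_card']; simp

/-- A finite lower subset of ℕ is an initial segment. -/
lemma lower_eq_Iio {S : Set ℕ} (hf : S.Finite) (hl : ∀ ⦃a b : ℕ⦄, a ≤ b → b ∈ S → a ∈ S) :
    S = Set.Iio S.ncard := by
  rcases S.eq_empty_or_nonempty with h | h
  · subst h; simp only [Set.ncard_empty]; ext x; simp
  · obtain ⟨m, hmS, hmax⟩ := Set.Finite.exists_maximalFor id S hf h
    have hS : S = Set.Iic m := by
      ext c; constructor
      · intro hc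
        by_contra hcm
        simp only [Set.mem_Iic, not_le] at hcm
        exact absurd (hmax hc (le_of_lt hcm)) (by simp only [id]; omega)
      · intro hc; exact hl hc hmS
    rw [hS]
    rw [show Set.Iic m = Set.Iio (m+1) by ext; simp [Nat.lt_succ_iff], ncardIio]

/-- Conjugate partition (as counting function). -/
noncomputable def conjP (f : ℕ → ℕ) (j : ℕ) : ℕ := Set.ncard {c | j < f c}

section conjP
variable {f : ℕ → ℕ} (hf : Antitone f) (hs : (Function.support f).Finite)
include hf hs

lemma conjP_setOf (j : ℕ) : {c | j < f c} = Set.Iio (conjP f j) := by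
  apply lower_eq_Iio
  · apply hs.subset
    intro c hc
    simp only [Set.mem_setOf_eq] at hc
    simp only [Function.mem_support]
    omega
  · exact fun a b hab hb => lt_of_lt_of_le hb (hf hab)

lemma mem_conjP {j c : ℕ} : j < f c ↔ c < conjP f j := by
  have := conjP_setOf hf hs j
  constructor
  · intro h
    have hc : c ∈ Set.Iio (conjP f j) := this ▸ (show c ∈ {c | j < f c} from h)
    exact hc
  · intro h
    have hc : c ∈ {c | j < f c} := by rw [this]; exact Set.mem_Iio.2 h
    exact hc

lemma conjP_antitone : Antitone (conjP f) := by
  intro a b hab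
  have h1 := conjP_setOf hf hs a
  have h2 := conjP_setOf hf hs b
  by_contra hlt
  push_neg at hlt
  have : conjP f a ∈ Set.Iio (conjP f b) := Set.mem_Iio.2 hlt
  rw [← h2] at this
  exact lt_irrefl _ ((mem_conjP hf hs).1 (lt_of_le_of_lt hab this))

omit hs in
lemma conjP_apply_lt (j : ℕ) (hj : f 0 ≤ j) : conjP f j = 0 := by
  have : {c | j < f c} = ∅ := by
    ext c; simp only [Set.mem_setOf_eq, Set.mem_empty_iff_false, iff_false, not_lt]
    exact le_trans (hf (Nat.zero_le c)) hj
  rw [conjP, this, Set.ncard_empty]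

omit hs in
lemma conjP_support : Function.support (conjP f) ⊆ Set.Iio (f 0) := by
  intro j hj
  simp only [Function.mem_support] at hj
  by_contra h
  simp only [Set.mem_Iio, not_lt] at h
  exact hj (conjP_apply_lt hf j h)

lemma conjP_conjP (c : ℕ) : conjP (conjP f) c = f c := by
  have : {j | c < conjP f j} = Set.Iio (f c) := by
    ext j; simp only [Set.mem_setOf_eq, Set.mem_Iio, ← mem_conjP hf hs]
  rw [conjP, this, ncardIio]
end conjP

/-- ncard of a bounded set of naturals as a filter card. -/
lemma ncard_eq_filter {S : Set ℕ} [DecidablePred (· ∈ S)] {N : ℕ} (h : ∀ c ∈ S, c < N) :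
    S.ncard = ((Finset.range N).filter (· ∈ S)).card := by
  have : S = ↑((Finset.range N).filter (· ∈ S)) := by
    ext c; simp only [Finset.coe_filter, Finset.mem_range, Set.mem_setOf_eq,
      iff_and_self]
    exact h c
  conv_lhs => rw [this]
  exact Set.ncard_coe_finset _

lemma conjP_finsum {f : ℕ → ℕ} (hf : Antitone f) (hs : (Function.support f).Finite) :
    ∑ᶠ j, conjP f j = ∑ᶠ c, f c := by
  obtain ⟨N, hN⟩ := hs.bddAbove
  have h1 : ∑ᶠ c, f c = ∑ c ∈ range (N+1), f c := by
    apply finsum_eq_sum_of_support_subset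
    intro c hc
    simp only [Finset.coe_range, Set.mem_Iio]
    exact lt_of_le_of_lt (hN hc) (Nat.lt_succ_self N)
  have h2 : ∑ᶠ j, conjP f j = ∑ j ∈ range (f 0), conjP f j := by
    apply finsum_eq_sum_of_support_subset
    intro j hj
    simp only [Finset.coe_range, Set.mem_Iio]
    exact conjP_support hf hj
  have h3 : ∀ j, conjP f j = ((range (N+1)).filter (fun c => j < f c)).card := by
    intro j
    apply ncard_eq_filter
    intro c hc
    simp only [Set.mem_setOf_eq] at hc
    by_contra h
    have : f c = 0 := by
      by_contra h0
      exact absurd (hN (Function.mem_support.2 h0)) (by omega)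
    omega
  have h4 : ∀ c, f c = ((range (f 0)).filter (fun j => j < f c)).card := by
    intro c
    have : (range (f 0)).filter (fun j => j < f c) = range (f c) := by
      ext j
      simp only [Finset.mem_filter, Finset.mem_range]
      have := hf (Nat.zero_le c)
      omega
    rw [this, Finset.card_range]
  rw [h1, h2]
  calc ∑ j ∈ range (f 0), conjP f j
      = ∑ j ∈ range (f 0), ∑ c ∈ range (N+1), if j < f c then 1 else 0 := by
        refine Finset.sum_congr rfl fun j _ => ?_
        rw [h3 j, Finset.card_filter]
    _ = ∑ c ∈ range (N+1), ∑ j ∈ range (f 0), if j < f c then 1 else 0 := Finset.sum_comm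
    _ = ∑ c ∈ range (N+1), f c := by
        refine Finset.sum_congr rfl fun c _ => ?_
        rw [← Finset.card_filter, ← h4 c]

lemma ncard_eq_filter' {P : ℕ → Prop} [DecidablePred P] {N : ℕ} (h : ∀ c, P c → c < N) :
    Set.ncard {c | P c} = ((Finset.range N).filter P).card := by
  have : {c | P c} = ↑((Finset.range N).filter P) := by
    ext c
    simp only [Finset.coe_filter, Finset.mem_range, Set.mem_setOf_eq, iff_and_self]
    exact h c
  conv_lhs => rw [this]
  exact Set.ncard_coe_finset _

/-- The predicate encoding a `T`-fixed point of `PFH_{n,n-k}`: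
`p.1` = column heights of `μ`, `p.2` = columns of the ordered removed boxes. -/
def IsFixedPoint (n k : ℕ) (p : (ℕ → ℕ) × (Fin k → ℕ)) : Prop :=
  Antitone p.1 ∧ (Function.support p.1).Finite ∧ (∑ᶠ c, p.1 c) = n ∧
    Function.Injective p.2 ∧ (∀ i, 0 < p.1 (p.2 i)) ∧
    ∀ j : ℕ, Antitone (fun c => p.1 c - Set.ncard {i : Fin k | (i : ℕ) < j ∧ p.2 i = c})

/-- The predicate encoding a pair `(λ | γ)` with `λ` a partition (listed as
`q.1 0 ≥ q.1 1 ≥ ⋯`), `γ = q.2 ∈ (ℤ_{≥0})^k`, and `|λ| + |γ| = n - k`. -/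
def IsPSPair (n k : ℕ) (q : (ℕ → ℕ) × (Fin k → ℕ)) : Prop :=
  Antitone q.1 ∧ (Function.support q.1).Finite ∧
    (∑ᶠ j, q.1 j) + (∑ i, q.2 i) + k = n

/-- The map `φ`: `γ_i` is the (0-indexed) row of the `i`-th removed box, and
`λ_{j+1}` is the number of columns of `μ` not containing a removed box and of height
at least `j+1` (i.e. `λ` is the transpose of `μ` with the touched columns deleted). -/
noncomputable def phiCGM (k : ℕ) (p : (ℕ → ℕ) × (Fin k → ℕ)) :
    (ℕ → ℕ) × (Fin k → ℕ) :=
  (fun j => Set.ncard {c : ℕ | (∀ i, p.2 i ≠ c) ∧ j + 1 ≤ p.1 c},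
   fun i => p.1 (p.2 i) - 1)

/-- The condition that every same-height column to the right of a removed column
was removed earlier. -/
def Dprime {k : ℕ} (p : (ℕ → ℕ) × (Fin k → ℕ)) : Prop :=
  ∀ (i : Fin k) (c' : ℕ), p.2 i < c' → p.1 c' = p.1 (p.2 i) →
    ∃ i' : Fin k, i' < i ∧ p.2 i' = c'

section Sj
variable {k : ℕ} {p : (ℕ → ℕ) × (Fin k → ℕ)} (hinj : Function.Injective p.2)
include hinj

lemma ncard_S_of_ex {j : ℕ} {c : ℕ} (i0 : Fin k) (h0 : (i0 : ℕ) < j ∧ p.2 i0 = c) :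
    Set.ncard {i : Fin k | (i : ℕ) < j ∧ p.2 i = c} = 1 := by
  have : {i : Fin k | (i : ℕ) < j ∧ p.2 i = c} = {i0} := by
    ext i
    simp only [Set.mem_setOf_eq, Set.mem_singleton_iff]
    constructor
    · rintro ⟨_, h2⟩; exact hinj (h2.trans h0.2.symm)
    · rintro rfl; exact h0
  rw [this, Set.ncard_singleton]

omit hinj in
lemma ncard_S_of_nex {j : ℕ} {c : ℕ} (h : ¬ ∃ i : Fin k, (i : ℕ) < j ∧ p.2 i = c) :
    Set.ncard {i : Fin k | (i : ℕ) < j ∧ p.2 i = c} = 0 := by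
  have : {i : Fin k | (i : ℕ) < j ∧ p.2 i = c} = ∅ := by
    ext i; simp only [Set.mem_setOf_eq, Set.mem_empty_iff_false, iff_false]
    exact fun hi => h ⟨i, hi⟩
  rw [this, Set.ncard_empty]

end Sj

lemma fixedPoint_dprime {n k : ℕ} {p : (ℕ → ℕ) × (Fin k → ℕ)}
    (hp : IsFixedPoint n k p) : Dprime p := by
  obtain ⟨ha, hs, hsum, hinj, hpos, hd⟩ := hp
  intro i c' hic hcol
  have h1 : Set.ncard {i' : Fin k | (i' : ℕ) < (i : ℕ) + 1 ∧ p.2 i' = p.2 i} = 1 :=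
    ncard_S_of_ex hinj i ⟨Nat.lt_succ_self _, rfl⟩
  by_contra hne
  push_neg at hne
  have h2 : Set.ncard {i' : Fin k | (i' : ℕ) < (i : ℕ) + 1 ∧ p.2 i' = c'} = 0 := by
    apply ncard_S_of_nex
    rintro ⟨i', hi', hci'⟩
    have hne' : i' ≠ i := by rintro rfl; rw [hci'] at hic; exact lt_irrefl _ hic
    have : i' < i := by
      rw [Fin.lt_def]
      rcases Nat.lt_or_ge (i' : ℕ) (i : ℕ) with h | h
      · exact h
      · exact absurd (Fin.val_injective (by omega : (i' : ℕ) = (i : ℕ))) hne'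
    exact hne i' this hci'
  have := hd ((i : ℕ) + 1) (le_of_lt hic)
  simp only [h1, h2, Nat.sub_zero] at this
  rw [hcol] at this
  have hpos' := hpos i
  omega

lemma dprime_to_d {k : ℕ} {p : (ℕ → ℕ) × (Fin k → ℕ)} (ha : Antitone p.1)
    (hinj : Function.Injective p.2) (hpos : ∀ i, 0 < p.1 (p.2 i)) (hdp : Dprime p) :
    ∀ j : ℕ, Antitone (fun c => p.1 c - Set.ncard {i : Fin k | (i : ℕ) < j ∧ p.2 i = c}) := by
  intro j c c' hcc'
  simp only
  by_cases hc : ∃ i : Fin k, (i : ℕ) < j ∧ p.2 i = c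
  · obtain ⟨i, hij, hbi⟩ := hc
    rw [ncard_S_of_ex hinj i ⟨hij, hbi⟩]
    rcases eq_or_lt_of_le hcc' with rfl | hlt
    · rw [ncard_S_of_ex hinj i ⟨hij, hbi⟩]
    rcases eq_or_lt_of_le (ha hcc' : p.1 c' ≤ p.1 c) with heq | hlt2
    · -- equal heights: c' is removed before i
      obtain ⟨i', hi'i, hbi'⟩ := hdp i c' (hbi ▸ hlt) (by rw [hbi, heq])
      rw [ncard_S_of_ex hinj i' ⟨by have := Fin.lt_def.1 hi'i; omega, hbi'⟩]
      omega
    · have h1 : Set.ncard {i : Fin k | (i : ℕ) < j ∧ p.2 i = c'} ≤ 1 := by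
        by_cases hc' : ∃ i : Fin k, (i : ℕ) < j ∧ p.2 i = c'
        · obtain ⟨i', h'⟩ := hc'; rw [ncard_S_of_ex hinj i' h']
        · rw [ncard_S_of_nex hc']; omega
      omega
  · rw [ncard_S_of_nex hc, Nat.sub_zero]
    have h1 : Set.ncard {i : Fin k | (i : ℕ) < j ∧ p.2 i = c'} ≤ 1 := by
      by_cases hc' : ∃ i : Fin k, (i : ℕ) < j ∧ p.2 i = c'
      · obtain ⟨i', h'⟩ := hc'; rw [ncard_S_of_ex hinj i' h']
      · rw [ncard_S_of_nex hc']; omega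
    have := ha hcc'
    omega

lemma filter_le_card_split {k : ℕ} (g : Fin k → ℕ) (x : ℕ) :
    (univ.filter (fun i' => x ≤ g i')).card
      = (univ.filter (fun i' => x < g i')).card
        + (univ.filter (fun i' : Fin k => g i' = x)).card := by
  classical
  have h1 : univ.filter (fun i' => x ≤ g i')
      = univ.filter (fun i' => x < g i') ∪ univ.filter (fun i' : Fin k => g i' = x) := by
    ext i'; simp only [Finset.mem_filter, Finset.mem_union, Finset.mem_univ, true_and]; omega
  rw [h1, Finset.card_union_of_disjoint]
  rw [Finset.disjoint_left]
  intro a ha hb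
  simp only [Finset.mem_filter, Finset.mem_univ, true_and] at ha hb
  omega

lemma card_split {k : ℕ} (g : Fin k → ℕ) (i : Fin k) :
    (univ.filter (fun i' => g i ≤ g i')).card
      = (univ.filter (fun i' => g i < g i' ∨ (g i' = g i ∧ i < i'))).card
        + (univ.filter (fun i' => g i' = g i ∧ i' < i)).card + 1 := by
  classical
  have h1 : univ.filter (fun i' => g i ≤ g i')
      = (univ.filter (fun i' => g i < g i' ∨ (g i' = g i ∧ i < i')))
        ∪ ((univ.filter (fun i' => g i' = g i ∧ i' < i)) ∪ {i}) := by
    ext i'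
    simp only [Finset.mem_filter, Finset.mem_union, Finset.mem_univ, true_and,
      Finset.mem_singleton]
    constructor
    · intro h
      rcases Nat.lt_or_ge (g i) (g i') with h2 | h2
      · exact Or.inl (Or.inl h2)
      · have heq : g i' = g i := by omega
        rcases lt_trichotomy i i' with h3 | h3 | h3
        · exact Or.inl (Or.inr ⟨heq, h3⟩)
        · exact Or.inr (Or.inr h3.symm)
        · exact Or.inr (Or.inl ⟨heq, h3⟩)
    · rintro ((h | ⟨h, _⟩) | (⟨h, _⟩ | rfl)) <;> omega
  have d2 : Disjoint (univ.filter (fun i' => g i' = g i ∧ i' < i)) ({i} : Finset (Fin k)) := by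
    rw [Finset.disjoint_left]
    intro a ha hb
    simp only [Finset.mem_filter, Finset.mem_univ, true_and, Finset.mem_singleton] at ha hb
    subst hb
    exact absurd ha.2 (lt_irrefl a)
  have d1 : Disjoint (univ.filter (fun i' => g i < g i' ∨ (g i' = g i ∧ i < i')))
      ((univ.filter (fun i' => g i' = g i ∧ i' < i)) ∪ {i}) := by
    rw [Finset.disjoint_left]
    intro a ha hb
    simp only [Finset.mem_filter, Finset.mem_union, Finset.mem_univ, true_and,
      Finset.mem_singleton] at ha hb
    rcases hb with ⟨h, h'⟩ | rfl
    · rcases ha with h2 | ⟨h2, h3⟩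
      · omega
      · exact absurd (lt_trans h3 h') (lt_irrefl _)
    · rcases ha with h2 | ⟨h2, h3⟩
      · omega
      · exact absurd h3 (lt_irrefl _)
  rw [h1, Finset.card_union_of_disjoint d1, Finset.card_union_of_disjoint d2,
    Finset.card_singleton]
  omega

lemma exists_filter_gt_card {k : ℕ} (B : Finset (Fin k)) (t : ℕ) (ht : t < B.card) :
    ∃ i ∈ B, (B.filter (fun i' => i < i')).card = t := by
  classical
  set d : Fin k → ℕ := fun i => (B.filter (fun i' => i < i')).card with hd
  have key : ∀ i₁ ∈ B, ∀ i₂ ∈ B, i₁ < i₂ → d i₂ < d i₁ := by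
    intro i₁ _ i₂ h2 h12
    apply Finset.card_lt_card
    rw [Finset.ssubset_def]
    constructor
    · intro x hx
      simp only [Finset.mem_filter] at hx ⊢
      exact ⟨hx.1, lt_trans h12 hx.2⟩
    · intro hsub
      have : i₂ ∈ B.filter (fun i' => i₂ < i') :=
        hsub (Finset.mem_filter.2 ⟨h2, h12⟩)
      simp only [Finset.mem_filter] at this
      exact absurd this.2 (lt_irrefl _)
  have hinj : Set.InjOn d ↑B := by
    intro a ha b hb hab
    rcases lt_trichotomy a b with h | h | h
    · exact absurd hab.symm (ne_of_lt (key a ha b hb h))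
    · exact h
    · exact absurd hab (ne_of_lt (key b hb a ha h))
  have himg : B.image d ⊆ range B.card := by
    intro t' ht'
    simp only [Finset.mem_image] at ht'
    obtain ⟨i, hi, rfl⟩ := ht'
    simp only [Finset.mem_range]
    have hsub : B.filter (fun i' => i < i') ⊆ B.erase i := by
      intro x hx
      simp only [Finset.mem_filter] at hx
      exact Finset.mem_erase.2 ⟨ne_of_gt hx.2, hx.1⟩
    calc d i ≤ (B.erase i).card := Finset.card_le_card hsub
      _ < B.card := Finset.card_erase_lt_of_mem hi
  have heq : B.image d = range B.card :=
    Finset.eq_of_subset_of_card_le himg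
      (by rw [Finset.card_range, Finset.card_image_of_injOn hinj])
  have : t ∈ B.image d := heq ▸ Finset.mem_range.2 ht
  simpa only [Finset.mem_image] using this

lemma card_P_split {k : ℕ} (g : Fin k → ℕ) (i : Fin k) :
    (univ.filter (fun i' => g i < g i' ∨ (g i' = g i ∧ i < i'))).card
      = (univ.filter (fun i' => g i < g i')).card
        + (univ.filter (fun i' => g i' = g i ∧ i < i')).card := by
  classical
  have h1 : univ.filter (fun i' => g i < g i' ∨ (g i' = g i ∧ i < i'))
      = univ.filter (fun i' => g i < g i') ∪ univ.filter (fun i' => g i' = g i ∧ i < i') := by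
    rw [Finset.filter_or]
  rw [h1, Finset.card_union_of_disjoint]
  rw [Finset.disjoint_left]
  intro a ha hb
  simp only [Finset.mem_filter, Finset.mem_univ, true_and] at ha hb
  omega

/-- The merged counting function: number of columns of `ψ(q)` of height `> j`. -/
noncomputable def Fq (k : ℕ) (q : (ℕ → ℕ) × (Fin k → ℕ)) (j : ℕ) : ℕ :=
  q.1 j + (univ.filter (fun i => j ≤ q.2 i)).card

/-- The inverse map `ψ`. -/
noncomputable def psiCGM (k : ℕ) (q : (ℕ → ℕ) × (Fin k → ℕ)) : (ℕ → ℕ) × (Fin k → ℕ) :=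
  (conjP (Fq k q),
   fun i => q.1 (q.2 i)
     + (univ.filter (fun i' => q.2 i < q.2 i' ∨ (q.2 i' = q.2 i ∧ i < i'))).card)

section PS

variable {k : ℕ} {q : (ℕ → ℕ) × (Fin k → ℕ)}
  (ha : Antitone q.1) (hs : (Function.support q.1).Finite)

include ha in
lemma Fq_antitone : Antitone (Fq k q) := by
  intro a b hab
  apply Nat.add_le_add (ha hab)
  apply Finset.card_le_card
  intro x hx
  simp only [Finset.mem_filter, Finset.mem_univ, true_and] at hx ⊢
  omega

include hs in
lemma Fq_support_finite : (Function.support (Fq k q)).Finite := by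
  obtain ⟨N, hN⟩ := hs.bddAbove
  apply (Set.finite_Iic (max N (univ.sup q.2))).subset
  intro j hj
  simp only [Function.mem_support, Fq] at hj
  by_contra h
  simp only [Set.mem_Iic, not_le, max_lt_iff] at h
  have h1 : q.1 j = 0 := by
    by_contra h0
    exact absurd (hN (Function.mem_support.2 h0)) (by omega)
  have h2 : univ.filter (fun i => j ≤ q.2 i) = ∅ := by
    apply Finset.filter_false_of_mem
    intro i _
    have := Finset.le_sup (Finset.mem_univ i) (f := q.2)
    omega
  apply hj
  rw [h1, h2, Finset.card_empty]
  omega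

include ha hs in
lemma mem_Fq {c j : ℕ} : c < Fq k q j ↔ j < conjP (Fq k q) c :=
  mem_conjP (Fq_antitone ha) (Fq_support_finite hs)

lemma psi_box_lt (i : Fin k) : (psiCGM k q).2 i < Fq k q (q.2 i) := by
  have := card_split q.2 i
  simp only [psiCGM, Fq]
  omega

include ha in
lemma psi_box_ge (i : Fin k) : Fq k q (q.2 i + 1) ≤ (psiCGM k q).2 i := by
  have h1 : univ.filter (fun i' => q.2 i + 1 ≤ q.2 i') = univ.filter (fun i' => q.2 i < q.2 i') := by
    apply Finset.filter_congr; intro i' _; omega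
  simp only [psiCGM, Fq, h1]
  apply Nat.add_le_add (ha (Nat.le_succ _))
  apply Finset.card_le_card
  intro x hx
  simp only [Finset.mem_filter, Finset.mem_univ, true_and] at hx ⊢
  exact Or.inl hx

include ha hs in
lemma psi_col_box (i : Fin k) : (psiCGM k q).1 ((psiCGM k q).2 i) = q.2 i + 1 := by
  have h1 : q.2 i < conjP (Fq k q) ((psiCGM k q).2 i) := (mem_Fq ha hs).1 (psi_box_lt i)
  have h2 : ¬ (q.2 i + 1 < conjP (Fq k q) ((psiCGM k q).2 i)) := by
    rw [← mem_Fq ha hs]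
    exact not_lt.2 (psi_box_ge ha i)
  simp only [psiCGM] at *
  omega

include ha in
lemma psi_box_gt_of_lt {i i' : Fin k} (h : q.2 i < q.2 i') :
    (psiCGM k q).2 i' < (psiCGM k q).2 i := by
  simp only [psiCGM]
  have hA : (univ.filter (fun i'' => q.2 i' ≤ q.2 i'')).card
      ≤ (univ.filter (fun i'' => q.2 i < q.2 i'')).card := by
    apply Finset.card_le_card
    intro x hx
    simp only [Finset.mem_filter, Finset.mem_univ, true_and] at hx ⊢
    omega
  have hB := card_split q.2 i'
  have hC : (univ.filter (fun i'' => q.2 i < q.2 i'')).card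
      ≤ (univ.filter (fun i'' => q.2 i < q.2 i'' ∨ (q.2 i'' = q.2 i ∧ i < i''))).card := by
    apply Finset.card_le_card
    intro x hx
    simp only [Finset.mem_filter, Finset.mem_univ, true_and] at hx ⊢
    exact Or.inl hx
  have hD : q.1 (q.2 i') ≤ q.1 (q.2 i) := ha (le_of_lt h)
  omega

lemma psi_box_gt_of_eq {i i' : Fin k} (h : q.2 i' = q.2 i) (hii : i < i') :
    (psiCGM k q).2 i' < (psiCGM k q).2 i := by
  simp only [psiCGM, h]
  have hcard : (univ.filter (fun i'' => q.2 i < q.2 i'' ∨ (q.2 i'' = q.2 i ∧ i' < i''))).card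
      < (univ.filter (fun i'' => q.2 i < q.2 i'' ∨ (q.2 i'' = q.2 i ∧ i < i''))).card := by
    apply Finset.card_lt_card
    rw [Finset.ssubset_def]
    constructor
    · intro x hx
      simp only [Finset.mem_filter, Finset.mem_univ, true_and] at hx ⊢
      rcases hx with hx | ⟨h1, h2⟩
      · exact Or.inl hx
      · exact Or.inr ⟨h1, lt_trans hii h2⟩
    · intro hsub
      have hi' : i' ∈ univ.filter (fun i'' => q.2 i < q.2 i'' ∨ (q.2 i'' = q.2 i ∧ i < i'')) := by
        simp only [Finset.mem_filter, Finset.mem_univ, true_and]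
        exact Or.inr ⟨h, hii⟩
      have h2 := hsub hi'
      simp only [Finset.mem_filter, Finset.mem_univ, true_and] at h2
      rcases h2 with h2 | ⟨_, h2⟩
      · rw [h] at h2; exact absurd h2 (lt_irrefl _)
      · exact absurd h2 (lt_irrefl _)
  omega

include ha in
lemma psi_box_inj : Function.Injective (psiCGM k q).2 := by
  intro a b hab
  by_contra hne
  rcases lt_trichotomy (q.2 a) (q.2 b) with h | h | h
  · exact absurd hab.symm (ne_of_lt (psi_box_gt_of_lt ha h))
  · rcases lt_trichotomy a b with h2 | h2 | h2
    · exact absurd hab.symm (ne_of_lt (psi_box_gt_of_eq h.symm h2))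
    · exact hne h2
    · exact absurd hab (ne_of_lt (psi_box_gt_of_eq h h2))
  · exact absurd hab (ne_of_lt (psi_box_gt_of_lt ha h))

end PS

section PS2
variable {k : ℕ} {q : (ℕ → ℕ) × (Fin k → ℕ)}
  (ha : Antitone q.1) (hs : (Function.support q.1).Finite)

include ha hs in
lemma psi_dprime : Dprime (psiCGM k q) := by
  classical
  intro i c' hlt hcol
  have hcb : (psiCGM k q).1 ((psiCGM k q).2 i) = q.2 i + 1 := psi_col_box ha hs i
  have hcol' : (psiCGM k q).1 c' = q.2 i + 1 := by rw [hcol, hcb]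
  have hc'lt : c' < Fq k q (q.2 i) := by
    rw [mem_Fq ha hs]
    simp only [psiCGM] at hcol'
    omega
  set B : Finset (Fin k) := univ.filter (fun i' => q.2 i' = q.2 i) with hB
  have hFg : Fq k q (q.2 i) = q.1 (q.2 i)
      + (univ.filter (fun i' => q.2 i < q.2 i')).card + B.card := by
    have := filter_le_card_split q.2 (q.2 i)
    simp only [Fq, hB]
    omega
  have hboxi : (psiCGM k q).2 i = q.1 (q.2 i)
      + (univ.filter (fun i' => q.2 i < q.2 i')).card
      + (univ.filter (fun i' => q.2 i' = q.2 i ∧ i < i')).card := by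
    have := card_P_split q.2 i
    simp only [psiCGM]
    omega
  set base := q.1 (q.2 i) + (univ.filter (fun i' => q.2 i < q.2 i')).card with hbase
  have ht1 : c' - base < B.card := by omega
  obtain ⟨i'', hi''B, hDcard⟩ := exists_filter_gt_card B (c' - base) ht1
  have hgi'' : q.2 i'' = q.2 i := by
    rw [hB] at hi''B
    exact (Finset.mem_filter.1 hi''B).2
  have hD : B.filter (fun i' => i'' < i')
      = univ.filter (fun i' => q.2 i' = q.2 i ∧ i'' < i') := by
    rw [hB, Finset.filter_filter]
  have hbox'' : (psiCGM k q).2 i'' = c' := by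
    have hsplit := card_P_split q.2 i''
    simp only [hgi''] at hsplit
    simp only [psiCGM, hgi'']
    rw [hD] at hDcard
    omega
  refine ⟨i'', ?_, hbox''⟩
  have hne : i'' ≠ i := by
    rintro rfl
    rw [hD] at hDcard
    omega
  rcases lt_trichotomy i'' i with h | h | h
  · exact h
  · exact absurd h hne
  · exfalso
    have hsub : (univ.filter (fun i' => q.2 i' = q.2 i ∧ i'' < i')).card
        ≤ (univ.filter (fun i' => q.2 i' = q.2 i ∧ i < i')).card := by
      apply Finset.card_le_card
      intro x hx
      simp only [Finset.mem_filter, Finset.mem_univ, true_and] at hx ⊢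
      exact ⟨hx.1, lt_trans h hx.2⟩
    rw [hD] at hDcard
    omega

include hs in
lemma Fq_finsum : ∑ᶠ j, Fq k q j = (∑ᶠ j, q.1 j) + (∑ i, q.2 i) + k := by
  classical
  obtain ⟨N, hN⟩ := hs.bddAbove
  set M := max (N + 1) (univ.sup q.2 + 1) with hM
  have hMgt : ∀ i, q.2 i < M :=
    fun i => lt_of_le_of_lt (Finset.le_sup (Finset.mem_univ i)) (by omega)
  have hq0 : ∀ j, M ≤ j → q.1 j = 0 := by
    intro j hj
    by_contra h0
    have := hN (Function.mem_support.2 h0)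
    omega
  have h1 : ∑ᶠ j, Fq k q j = ∑ j ∈ range M, Fq k q j := by
    apply finsum_eq_sum_of_support_subset
    intro j hj
    simp only [Function.mem_support, Fq] at hj
    simp only [Finset.coe_range, Set.mem_Iio]
    by_contra h
    push_neg at h
    apply hj
    rw [hq0 j h, Finset.filter_false_of_mem (fun i _ => by have := hMgt i; omega),
      Finset.card_empty]
    omega
  have h2 : ∑ᶠ j, q.1 j = ∑ j ∈ range M, q.1 j := by
    apply finsum_eq_sum_of_support_subset
    intro j hj
    simp only [Finset.coe_range, Set.mem_Iio]
    by_contra h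
    push_neg at h
    exact hj (hq0 j h)
  have h3 : ∑ j ∈ range M, (univ.filter (fun i => j ≤ q.2 i)).card
      = (∑ i, q.2 i) + k := by
    calc ∑ j ∈ range M, (univ.filter (fun i => j ≤ q.2 i)).card
        = ∑ j ∈ range M, ∑ i : Fin k, if j ≤ q.2 i then 1 else 0 := by
          refine Finset.sum_congr rfl fun j _ => Finset.card_filter _ _
      _ = ∑ i : Fin k, ∑ j ∈ range M, if j ≤ q.2 i then 1 else 0 := Finset.sum_comm
      _ = ∑ i : Fin k, (q.2 i + 1) := by
          refine Finset.sum_congr rfl fun i _ => ?_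
          rw [← Finset.card_filter]
          have : (range M).filter (fun j => j ≤ q.2 i) = range (q.2 i + 1) := by
            ext j
            simp only [Finset.mem_filter, Finset.mem_range]
            have := hMgt i
            omega
          rw [this, Finset.card_range]
      _ = (∑ i, q.2 i) + k := by
          rw [Finset.sum_add_distrib, Finset.sum_const, Finset.card_univ,
            Fintype.card_fin, smul_eq_mul, mul_one]
  rw [h1, h2]
  simp only [Fq]
  rw [Finset.sum_add_distrib, h3]
  omega

include ha hs in
lemma psi_mapsTo {n : ℕ} (hq : IsPSPair n k q) : IsFixedPoint n k (psiCGM k q) := by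
  have hFa := Fq_antitone (q := q) ha
  have hFs := Fq_support_finite (q := q) hs
  have hpos : ∀ i, 0 < (psiCGM k q).1 ((psiCGM k q).2 i) := by
    intro i
    rw [psi_col_box ha hs i]
    omega
  refine ⟨conjP_antitone hFa hFs, (Set.finite_Iio _).subset (conjP_support hFa), ?_,
    psi_box_inj ha, hpos, ?_⟩
  · have : (psiCGM k q).1 = conjP (Fq k q) := rfl
    rw [this, conjP_finsum hFa hFs, Fq_finsum hs, hq.2.2]
  · exact dprime_to_d (conjP_antitone hFa hFs) (psi_box_inj ha) hpos (psi_dprime ha hs)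

end PS2

section FP
variable {n k : ℕ} {p : (ℕ → ℕ) × (Fin k → ℕ)}

/-- Key counting identity: the conjugate of `μ` splits as `λ` plus the removed boxes. -/
lemma phi_F1 (hp : IsFixedPoint n k p) (j : ℕ) :
    conjP p.1 j = Fq k (phiCGM k p) j := by
  classical
  obtain ⟨hcol, hs, hsum, hinj, hpos, hd⟩ := hp
  obtain ⟨N, hN⟩ := hs.bddAbove
  have hbound : ∀ c, j < p.1 c → c < N + 1 := by
    intro c hc
    have : c ∈ Function.support p.1 := by
      simp only [Function.mem_support]
      omega
    exact lt_of_le_of_lt (hN this) (Nat.lt_succ_self N)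
  set A : Finset ℕ := (range (N+1)).filter (fun c => j < p.1 c) with hA
  have h1 : conjP p.1 j = A.card :=
    ncard_eq_filter' (P := fun c => j < p.1 c) (N := N + 1) hbound
  have h2 : (phiCGM k p).1 j = (A.filter (fun c => ∀ i, p.2 i ≠ c)).card := by
    show Set.ncard {c : ℕ | (∀ i, p.2 i ≠ c) ∧ j + 1 ≤ p.1 c} = _
    rw [ncard_eq_filter' (P := fun c => (∀ i, p.2 i ≠ c) ∧ j + 1 ≤ p.1 c) (N := N + 1)
      (fun c hc => hbound c (by omega))]
    congr 1
    rw [hA, Finset.filter_filter]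
    apply Finset.filter_congr
    intro c _
    constructor
    · rintro ⟨h1', h2'⟩
      exact ⟨by omega, h1'⟩
    · rintro ⟨h1', h2'⟩
      exact ⟨h2', by omega⟩
  have h3 : (univ.filter (fun i : Fin k => j ≤ p.1 (p.2 i) - 1)).card
      = (A.filter (fun c => ¬ ∀ i, p.2 i ≠ c)).card := by
    apply Finset.card_bij (fun i _ => p.2 i)
    · intro i hi
      simp only [Finset.mem_filter, Finset.mem_univ, true_and] at hi
      have hp1 := hpos i
      simp only [hA, Finset.mem_filter, Finset.mem_range]
      refine ⟨⟨hbound _ (by omega), by omega⟩, ?_⟩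
      push_neg
      exact ⟨i, rfl⟩
    · intro a _ b _ hab
      exact hinj hab
    · intro c hc
      simp only [hA, Finset.mem_filter, Finset.mem_range] at hc
      obtain ⟨⟨hcN, hjc⟩, hex⟩ := hc
      push_neg at hex
      obtain ⟨i, hi⟩ := hex
      refine ⟨i, ?_, hi⟩
      simp only [Finset.mem_filter, Finset.mem_univ, true_and]
      rw [← hi] at hjc
      omega
  have h4 := Finset.card_filter_add_card_filter_not
    (s := A) (p := fun c => ∀ i, p.2 i ≠ c)
  simp only [Fq]
  have h5 : (univ.filter (fun i : Fin k => j ≤ (phiCGM k p).2 i)).card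
      = (univ.filter (fun i : Fin k => j ≤ p.1 (p.2 i) - 1)).card := rfl
  omega

/-- The box positions are recovered by the `ψ` formula. -/
lemma phi_F2 (hp : IsFixedPoint n k p) (i : Fin k) :
    (psiCGM k (phiCGM k p)).2 i = p.2 i := by
  classical
  have hdp := fixedPoint_dprime hp
  obtain ⟨hcol, hs, hsum, hinj, hpos, hd⟩ := hp
  set g : Fin k → ℕ := fun i => p.1 (p.2 i) - 1 with hg
  have hGiff : ∀ (j c : ℕ), j < p.1 c ↔ c < conjP p.1 j := fun j c => mem_conjP hcol hs
  have hcb : ∀ i', p.1 (p.2 i') = g i' + 1 := by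
    intro i'
    have := hpos i'
    simp only [hg]
    omega
  have hboxlt : p.2 i < conjP p.1 (g i) := (hGiff _ _).1 (by rw [hcb i]; omega)
  have hboxge : conjP p.1 (g i + 1) ≤ p.2 i := by
    by_contra h
    push_neg at h
    have := (hGiff (g i + 1) (p.2 i)).2 h
    rw [hcb i] at this
    omega
  have hcount : (univ.filter (fun i' : Fin k => g i' = g i ∧ i' < i)).card
      = (Finset.Ioo (p.2 i) (conjP p.1 (g i))).card := by
    apply Finset.card_bij (fun i' _ => p.2 i')
    · intro i' hi'
      simp only [Finset.mem_filter, Finset.mem_univ, true_and] at hi'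
      obtain ⟨hgi', hlti⟩ := hi'
      have hcoleq : p.1 (p.2 i') = p.1 (p.2 i) := by rw [hcb i', hcb i, hgi']
      have hne : p.2 i' ≠ p.2 i := fun h => (ne_of_lt hlti) (hinj h)
      have hgt : p.2 i < p.2 i' := by
        rcases lt_trichotomy (p.2 i') (p.2 i) with h | h | h
        · exfalso
          obtain ⟨i'', hi''lt, hbi''⟩ := hdp i' (p.2 i) h hcoleq.symm
          have : i'' = i := hinj hbi''
          subst this
          exact absurd (lt_trans hi''lt hlti) (lt_irrefl _)
        · exact absurd h hne
        · exact h
      simp only [Finset.mem_Ioo]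
      exact ⟨hgt, (hGiff _ _).1 (by rw [hcoleq, hcb i]; omega)⟩
    · intro a _ b _ hab
      exact hinj hab
    · intro c hc
      simp only [Finset.mem_Ioo] at hc
      obtain ⟨hc1, hc2⟩ := hc
      have hcolc : p.1 c = p.1 (p.2 i) := by
        have hup : g i < p.1 c := (hGiff _ _).2 hc2
        have hdn : ¬ (g i + 1 < p.1 c) := by
          intro h
          have := (hGiff _ _).1 h
          omega
        rw [hcb i]
        omega
      obtain ⟨i', hi'lt, hbi'⟩ := hdp i c hc1 hcolc
      refine ⟨i', ?_, hbi'⟩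
      simp only [Finset.mem_filter, Finset.mem_univ, true_and]
      refine ⟨?_, hi'lt⟩
      simp only [hg]
      rw [hbi', hcolc]
  rw [Nat.card_Ioo] at hcount
  have hF1 : conjP p.1 (g i) = Fq k (phiCGM k p) (g i) :=
    phi_F1 ⟨hcol, hs, hsum, hinj, hpos, hd⟩ (g i)
  have hsplit := card_split g i
  have hFq : Fq k (phiCGM k p) (g i)
      = (phiCGM k p).1 (g i) + (univ.filter (fun i' : Fin k => g i ≤ g i')).card := rfl
  have hgoal : (psiCGM k (phiCGM k p)).2 i
      = (phiCGM k p).1 (g i)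
        + (univ.filter (fun i' : Fin k => g i < g i' ∨ (g i' = g i ∧ i < i'))).card := rfl
  omega

end FP

lemma phi_mapsTo {n k : ℕ} {p : (ℕ → ℕ) × (Fin k → ℕ)} (hp : IsFixedPoint n k p) :
    IsPSPair n k (phiCGM k p) := by
  classical
  have hF1 := phi_F1 hp
  obtain ⟨hcol, hs, hsum, hinj, hpos, hd⟩ := hp
  have hFeq : Fq k (phiCGM k p) = conjP p.1 := funext fun j => (hF1 j).symm
  have hlam_le : ∀ j, (phiCGM k p).1 j ≤ conjP p.1 j := by
    intro j
    rw [← hFeq]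
    exact Nat.le_add_right _ _
  have hlam_fin : (Function.support (phiCGM k p).1).Finite := by
    apply ((Set.finite_Iio (p.1 0)).subset (conjP_support hcol)).subset
    intro j hj
    simp only [Function.mem_support] at hj ⊢
    have := hlam_le j
    omega
  refine ⟨?_, hlam_fin, ?_⟩
  · intro a b hab
    show Set.ncard _ ≤ Set.ncard _
    apply Set.ncard_le_ncard
    · intro c hc
      simp only [Set.mem_setOf_eq] at hc ⊢
      exact ⟨hc.1, by omega⟩
    · apply hs.subset
      intro c hc
      simp only [Set.mem_setOf_eq] at hc
      simp only [Function.mem_support]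
      omega
  · have h1 : ∑ᶠ j, Fq k (phiCGM k p) j
        = (∑ᶠ j, (phiCGM k p).1 j) + (∑ i, (phiCGM k p).2 i) + k :=
      Fq_finsum hlam_fin
    rw [hFeq] at h1
    rw [conjP_finsum hcol hs, hsum] at h1
    omega

/-- `φ` is a bijection from the fixed points of `PFH_{n,n-k}` onto the pairs
`(λ | γ)` with `|λ| + |γ| = n - k`. -/
theorem phiCGM_bijective (n k : ℕ) (hkn : k ≤ n) :
    Set.BijOn (phiCGM k) {p | IsFixedPoint n k p} {q | IsPSPair n k q} := by
  have hL : Set.LeftInvOn (psiCGM k) (phiCGM k) {p | IsFixedPoint n k p} := by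
    intro p hp
    simp only [Set.mem_setOf_eq] at hp
    have h1 : (psiCGM k (phiCGM k p)).1 = p.1 := by
      funext c
      have hFeq : Fq k (phiCGM k p) = conjP p.1 := funext fun j => (phi_F1 hp j).symm
      show conjP (Fq k (phiCGM k p)) c = p.1 c
      rw [hFeq]
      exact conjP_conjP hp.1 hp.2.1 c
    exact Prod.ext h1 (funext (phi_F2 hp))
  have hR : Set.RightInvOn (psiCGM k) (phiCGM k) {q | IsPSPair n k q} := by
    intro q hq
    simp only [Set.mem_setOf_eq] at hq
    obtain ⟨ha, hs, hsum⟩ := hq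
    have hpFP : IsFixedPoint n k (psiCGM k q) := psi_mapsTo ha hs ⟨ha, hs, hsum⟩
    have hsnd : (phiCGM k (psiCGM k q)).2 = q.2 := by
      funext i
      show (psiCGM k q).1 ((psiCGM k q).2 i) - 1 = q.2 i
      rw [psi_col_box ha hs i]
      omega
    have hfst : (phiCGM k (psiCGM k q)).1 = q.1 := by
      funext j
      have h1 := phi_F1 hpFP j
      have h2 : conjP (psiCGM k q).1 j = Fq k q j := by
        show conjP (conjP (Fq k q)) j = Fq k q j
        exact conjP_conjP (Fq_antitone ha) (Fq_support_finite hs) j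
      have h3 : Fq k (phiCGM k (psiCGM k q)) j
          = (phiCGM k (psiCGM k q)).1 j
            + (univ.filter (fun i => j ≤ q.2 i)).card := by
        simp only [Fq, hsnd]
      have h4 : Fq k q j = q.1 j + (univ.filter (fun i => j ≤ q.2 i)).card := rfl
      have h5 : conjP (psiCGM k q).1 j = conjP (psiCGM k q).1 j := rfl
      rw [h2] at h1
      omega
    exact Prod.ext hfst hsnd
  exact Set.InvOn.bijOn ⟨hL, hR⟩ (fun p hp => phi_mapsTo hp)
    (fun q hq => psi_mapsTo hq.1 hq.2.1 hq)
end

section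
/- Let v = s_k ··· ŝ_{t_r} ··· ŝ_{t_1} ··· s_1 (the product of simple transpositions s_k down to s_1 omitting s_{t_r},...,s_{t_1}, where 1 ≤ t_1 < ··· < t_r ≤ k), acting on (k+1)-tuples. Applying the operators T_k^{-1} ··· T_1^{-1}, where T_i^{-1} v_u = ((1-t^{-1})u_i/(u_i - u_{i+1})) v_u + ((t^{-1}u_i - u_{i+1})/(u_i - u_{i+1})) v_{s_i(u)}, to the basis vector v_{(x,w_1,...,w_k)}, the coefficient of v_{v(x,w_1,...,w_k)} in the expansion equals ((1-t^{-1})x/(x-w_{t_1})) · ∏_{u=1}^{r-1}((1-t^{-1})w_{t_u}/(w_{t_u}-w_{t_{u+1}})) · ∏_{j=1}^{t_1-1}((t^{-1}x-w_j)/(x-w_j)) · ∏_{u=1}^{r}∏_{j=t_u+1}^{t_{u+1}-1}((t^{-1}w_{t_u}-w_j)/(w_{t_u}-w_j)), with t_{r+1} := k+1. -/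
/-!
STATEMENT 11: Coefficient extraction for `T_k⁻¹ ⋯ T_1⁻¹ v_{(x,w_1,…,w_k)}`.

`V` is the free `K`-module on `(k+1)`-tuples of scalars;
`T_i⁻¹ v_u = ((1-t⁻¹)u_i/(u_i-u_{i+1})) v_u + ((t⁻¹u_i-u_{i+1})/(u_i-u_{i+1})) v_{s_i(u)}`.
With `I_1 = {t_1 < ⋯ < t_r} ⊆ {1,…,k}`, `t_{r+1} := k+1`, and
`v = s_k ⋯ ŝ_{t_r} ⋯ ŝ_{t_1} ⋯ s_1`, the coefficient of `v_{v(x,w)}` in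
`T_k⁻¹ ⋯ T_1⁻¹ v_{(x,w)}` equals
`((1-t⁻¹)x/(x-w_{t_1})) ∏_{u=1}^{r-1}((1-t⁻¹)w_{t_u}/(w_{t_u}-w_{t_{u+1}}))
 ∏_{j=1}^{t_1-1}((t⁻¹x-w_j)/(x-w_j))
 ∏_{u=1}^{r}∏_{j=t_u+1}^{t_{u+1}-1}((t⁻¹w_{t_u}-w_j)/(w_{t_u}-w_j))`.
-/

open Finset

variable {K : Type*} [Field K]

/-- The operator `T_a⁻¹` (acting at positions `a, a+1`, 0-indexed) on the free module
on `(k+1)`-tuples. -/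
noncomputable def TinvOp (t : K) {k : ℕ} (a : Fin k)
    (f : (Fin (k + 1) → K) →₀ K) : (Fin (k + 1) → K) →₀ K :=
  f.sum fun u c =>
    c • (((1 - t⁻¹) * u a.castSucc / (u a.castSucc - u a.succ)) •
          Finsupp.single u (1 : K)
        + ((t⁻¹ * u a.castSucc - u a.succ) / (u a.castSucc - u a.succ)) •
          Finsupp.single (u ∘ (Equiv.swap a.castSucc a.succ)) (1 : K))

/-- `T_k⁻¹ ⋯ T_1⁻¹` applied to `f` (apply `T_1⁻¹` first). -/
noncomputable def TinvComposite (t : K) (k : ℕ)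
    (f : (Fin (k + 1) → K) →₀ K) : (Fin (k + 1) → K) →₀ K :=
  (List.finRange k).foldl (fun g a => TinvOp t a g) f

/-- The tuple `v(x,w_1,…,w_k)`, where `v = s_k ⋯ ŝ_{t_r} ⋯ ŝ_{t_1} ⋯ s_1` applies the
simple transpositions `s_1, s_2, …, s_k` in this order, omitting those with index in
`I_1 = {ts 1, …, ts r}`. -/
noncomputable def vTuple (k r : ℕ) (ts : ℕ → ℕ) (xw : Fin (k + 1) → K) :
    Fin (k + 1) → K :=
  ((List.finRange k).filter
      (fun (a : Fin k) => decide (∀ u ∈ Finset.Icc (1 : ℕ) r, ts u ≠ (a : ℕ) + 1))).foldl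
    (fun (u : Fin (k + 1) → K) (a : Fin k) => u ∘ (Equiv.swap a.castSucc a.succ)) xw

set_option linter.unusedSectionVars false

omit [Field K] in
lemma comp_swap_comp_swap {k : ℕ} (a : Fin k) (V : Fin (k+1) → K) :
    (V ∘ (Equiv.swap a.castSucc a.succ)) ∘ (Equiv.swap a.castSucc a.succ) = V := by
  funext p
  simp [Function.comp, Equiv.swap_apply_self]

lemma TinvOp_apply (t : K) {k : ℕ} (a : Fin k) (f : (Fin (k + 1) → K) →₀ K)
    (V : Fin (k+1) → K) :
    TinvOp t a f V =
      ((1 - t⁻¹) * V a.castSucc / (V a.castSucc - V a.succ)) * f V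
      + ((t⁻¹ * V a.succ - V a.castSucc) / (V a.succ - V a.castSucc)) *
          f (V ∘ (Equiv.swap a.castSucc a.succ)) := by
  classical
  rw [TinvOp, Finsupp.sum_apply]
  have key : (f.sum fun u c =>
      (c • (((1 - t⁻¹) * u a.castSucc / (u a.castSucc - u a.succ)) •
          Finsupp.single u (1 : K)
        + ((t⁻¹ * u a.castSucc - u a.succ) / (u a.castSucc - u a.succ)) •
          Finsupp.single (u ∘ (Equiv.swap a.castSucc a.succ)) (1 : K))) V)
      = (f.sum fun u c =>
          (if u = V then ((1 - t⁻¹) * u a.castSucc / (u a.castSucc - u a.succ)) * c else 0))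
        + (f.sum fun u c =>
          (if u = V ∘ (Equiv.swap a.castSucc a.succ) then
            ((t⁻¹ * u a.castSucc - u a.succ) / (u a.castSucc - u a.succ)) * c else 0)) := by
    rw [← Finsupp.sum_add]
    apply Finsupp.sum_congr
    intro u _
    have hiff : (u ∘ (Equiv.swap a.castSucc a.succ) = V) ↔
        (u = V ∘ (Equiv.swap a.castSucc a.succ)) := by
      constructor
      · rintro rfl; rw [comp_swap_comp_swap]
      · rintro rfl; rw [comp_swap_comp_swap]
    simp only [Finsupp.smul_apply, Finsupp.coe_add, Pi.add_apply, smul_eq_mul]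
    by_cases h1 : u = V <;> by_cases h2 : u = V ∘ (Equiv.swap a.castSucc a.succ)
    · have hs : u ∘ (Equiv.swap a.castSucc a.succ) = V := hiff.mpr h2
      rw [if_pos h1, if_pos h2, h1, ← h1.symm.trans h2, Finsupp.single_eq_same]
      ring
    · have hs : u ∘ (Equiv.swap a.castSucc a.succ) ≠ V := fun h => h2 (hiff.mp h)
      have hs' : V ∘ (Equiv.swap a.castSucc a.succ) ≠ V := h1 ▸ hs
      rw [if_pos h1, if_neg h2, h1, Finsupp.single_eq_same, Finsupp.single_eq_of_ne' hs']
      ring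
    · have hs : u ∘ (Equiv.swap a.castSucc a.succ) = V := hiff.mpr h2
      rw [if_neg h1, if_pos h2, Finsupp.single_eq_of_ne' h1, hs, Finsupp.single_eq_same]
      ring
    · have hs : u ∘ (Equiv.swap a.castSucc a.succ) ≠ V := fun h => h2 (hiff.mp h)
      rw [if_neg h1, if_neg h2, Finsupp.single_eq_of_ne' h1, Finsupp.single_eq_of_ne' hs]
      ring
  rw [key, Finsupp.sum_ite_eq', Finsupp.sum_ite_eq']
  have e1 : (if V ∈ f.support then
        ((1 - t⁻¹) * V a.castSucc / (V a.castSucc - V a.succ)) * f V else 0)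
      = ((1 - t⁻¹) * V a.castSucc / (V a.castSucc - V a.succ)) * f V := by
    split_ifs with h
    · rfl
    · rw [Finsupp.notMem_support_iff.mp h, mul_zero]
  have e2 : (if V ∘ (Equiv.swap a.castSucc a.succ) ∈ f.support then
        ((t⁻¹ * (V ∘ (Equiv.swap a.castSucc a.succ)) a.castSucc
            - (V ∘ (Equiv.swap a.castSucc a.succ)) a.succ)
          / ((V ∘ (Equiv.swap a.castSucc a.succ)) a.castSucc
            - (V ∘ (Equiv.swap a.castSucc a.succ)) a.succ))
          * f (V ∘ (Equiv.swap a.castSucc a.succ)) else 0)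
      = ((t⁻¹ * V a.succ - V a.castSucc) / (V a.succ - V a.castSucc)) *
          f (V ∘ (Equiv.swap a.castSucc a.succ)) := by
    split_ifs with h
    · simp only [Function.comp_apply, Equiv.swap_apply_left, Equiv.swap_apply_right]
    · rw [Finsupp.notMem_support_iff.mp h, mul_zero]
  rw [e1, e2]

/-- condition: j ∈ I₁ -/
def inI (r : ℕ) (ts : ℕ → ℕ) (j : ℕ) : Prop := ∃ u ∈ Finset.Icc 1 r, ts u = j

instance (r : ℕ) (ts : ℕ → ℕ) (j : ℕ) : Decidable (inI r ts j) := by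
  unfold inI; infer_instance

noncomputable def cVal (r : ℕ) (ts : ℕ → ℕ) (x : K) (w : ℕ → K) : ℕ → K
  | 0 => x
  | m + 1 => if inI r ts (m+1) then w (m+1) else cVal r ts x w m

noncomputable def factorF (t : K) (r : ℕ) (ts : ℕ → ℕ) (x : K) (w : ℕ → K) (m : ℕ) : K :=
  if inI r ts (m+1) then
    (1 - t⁻¹) * cVal r ts x w m / (cVal r ts x w m - w (m+1))
  else (t⁻¹ * cVal r ts x w m - w (m+1)) / (cVal r ts x w m - w (m+1))

noncomputable def Ftrunc (t : K) (k : ℕ) (xw : Fin (k+1) → K) (m : ℕ) :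
    (Fin (k + 1) → K) →₀ K :=
  ((List.finRange k).take m).foldl (fun g a => TinvOp t a g) (Finsupp.single xw 1)

noncomputable def Utrunc (k r : ℕ) (ts : ℕ → ℕ) (xw : Fin (k+1) → K) (m : ℕ) :
    Fin (k + 1) → K :=
  (((List.finRange k).take m).filter
      (fun (a : Fin k) => decide (∀ u ∈ Finset.Icc (1 : ℕ) r, ts u ≠ (a : ℕ) + 1))).foldl
    (fun (u : Fin (k + 1) → K) (a : Fin k) => u ∘ (Equiv.swap a.castSucc a.succ)) xw

lemma take_finRange_succ {k m : ℕ} (hm : m < k) :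
    (List.finRange k).take (m+1) = (List.finRange k).take m ++ [⟨m, hm⟩] := by
  rw [List.take_succ]
  congr 1
  rw [List.getElem?_eq_getElem (by simp [hm])]
  simp [List.getElem_finRange]

lemma Ftrunc_succ (t : K) {k : ℕ} (xw : Fin (k+1) → K) {m : ℕ} (hm : m < k) :
    Ftrunc t k xw (m+1) = TinvOp t ⟨m, hm⟩ (Ftrunc t k xw m) := by
  rw [Ftrunc, take_finRange_succ hm, List.foldl_append]
  rfl

lemma Utrunc_succ {k : ℕ} (r : ℕ) (ts : ℕ → ℕ) (xw : Fin (k+1) → K) {m : ℕ} (hm : m < k) :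
    Utrunc k r ts xw (m+1) =
      if inI r ts (m+1) then Utrunc k r ts xw m
      else Utrunc k r ts xw m ∘
        (Equiv.swap (Fin.castSucc ⟨m, hm⟩) (Fin.succ ⟨m, hm⟩)) := by
  rw [Utrunc, take_finRange_succ hm, List.filter_append]
  by_cases h : inI r ts (m+1)
  · rw [if_pos h]
    have : (List.filter (fun (a : Fin k) =>
        decide (∀ u ∈ Finset.Icc (1 : ℕ) r, ts u ≠ (a : ℕ) + 1)) [⟨m, hm⟩]) = [] := by
      simp only [List.filter, decide_eq_true_eq]
      rw [decide_eq_false (by push_neg; obtain ⟨u, hu, hts⟩ := h; exact ⟨u, hu, hts⟩)]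
    rw [this, List.append_nil]
    rfl
  · rw [if_neg h]
    have : (List.filter (fun (a : Fin k) =>
        decide (∀ u ∈ Finset.Icc (1 : ℕ) r, ts u ≠ (a : ℕ) + 1)) [⟨m, hm⟩]) = [⟨m, hm⟩] := by
      simp only [List.filter]
      rw [decide_eq_true]
      intro u hu hts
      exact h ⟨u, hu, hts⟩
    rw [this, List.foldl_append]
    rfl

set_option linter.unusedSectionVars false

lemma take_finRange_stab {k m : ℕ} (hm : k ≤ m) :
    (List.finRange k).take (m+1) = (List.finRange k).take m := by
  rw [List.take_of_length_le (by simpa using Nat.le_succ_of_le hm),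
    List.take_of_length_le (by simpa using hm)]

lemma swap_fix {k : ℕ} (hm : m < k) (p : Fin (k+1)) (hp : m + 1 < (p : ℕ)) :
    Equiv.swap (Fin.castSucc ⟨m, hm⟩) (Fin.succ ⟨m, hm⟩) p = p := by
  apply Equiv.swap_apply_of_ne_of_ne
  · exact fun h => by simp [Fin.ext_iff] at h; omega
  · exact fun h => by simp [Fin.ext_iff] at h; omega

lemma Utrunc_untouched {k : ℕ} (r : ℕ) (ts : ℕ → ℕ) (xw : Fin (k+1) → K) :
    ∀ (m : ℕ) (p : Fin (k+1)), m < (p : ℕ) → Utrunc k r ts xw m p = xw p := by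
  intro m
  induction m with
  | zero => intro p _; rfl
  | succ m ih =>
    intro p hp
    have hm : m < k := by have := p.isLt; omega
    rw [Utrunc_succ r ts xw hm]
    split_ifs with h
    · exact ih p (by omega)
    · show Utrunc k r ts xw m (Equiv.swap _ _ p) = xw p
      rw [swap_fix hm p hp]
      exact ih p (by omega)

lemma Utrunc_inj {k : ℕ} (r : ℕ) (ts : ℕ → ℕ) (xw : Fin (k+1) → K)
    (hinj : Function.Injective xw) :
    ∀ m, Function.Injective (Utrunc k r ts xw m) := by
  intro m
  induction m with
  | zero => exact hinj
  | succ m ih =>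
    by_cases hm : m < k
    · rw [Utrunc_succ r ts xw hm]
      split_ifs with h
      · exact ih
      · exact ih.comp (Equiv.injective _)
    · rw [Utrunc, take_finRange_stab (by omega)]
      exact ih

lemma Ftrunc_vanish (t : K) {k : ℕ} (xw : Fin (k+1) → K) :
    ∀ (m : ℕ) (V : Fin (k+1) → K) (p : Fin (k+1)), m < (p : ℕ) → V p ≠ xw p →
      Ftrunc t k xw m V = 0 := by
  intro m
  induction m with
  | zero =>
    intro V p _ hne
    exact Finsupp.single_eq_of_ne' (fun h => hne (congrFun h.symm p))
  | succ m ih =>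
    intro V p hp hne
    have hm : m < k := by have := p.isLt; omega
    rw [Ftrunc_succ t xw hm, TinvOp_apply]
    rw [ih V p (by omega) hne,
      ih (V ∘ (Equiv.swap (Fin.castSucc ⟨m, hm⟩) (Fin.succ ⟨m, hm⟩))) p (by omega)
        (by rwa [Function.comp_apply, swap_fix hm p hp])]
    ring

lemma Utrunc_pos {k r : ℕ} (ts : ℕ → ℕ) (x : K) (w : ℕ → K) (xw : Fin (k+1) → K)
    (hxw : ∀ i : Fin (k + 1), xw i = if (i : ℕ) = 0 then x else w (i : ℕ)) :
    ∀ (m : ℕ) (hm : m ≤ k), Utrunc k r ts xw m ⟨m, by omega⟩ = cVal r ts x w m := by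
  intro m
  induction m with
  | zero =>
    intro _
    show xw ⟨0, by omega⟩ = x
    rw [hxw]; rfl
  | succ m ih =>
    intro hm1
    have hm : m < k := by omega
    rw [Utrunc_succ r ts xw hm]
    by_cases h : inI r ts (m+1)
    · rw [if_pos h]
      have := Utrunc_untouched r ts xw m ⟨m+1, by omega⟩ (by simp)
      rw [this, hxw]
      simp only [cVal, if_pos h]
      rfl
    · rw [if_neg h]
      show Utrunc k r ts xw m (Equiv.swap _ _ ⟨m+1, by omega⟩) = _
      have hsw : Equiv.swap (Fin.castSucc (⟨m, hm⟩ : Fin k)) (Fin.succ ⟨m, hm⟩)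
          ⟨m+1, by omega⟩ = Fin.castSucc ⟨m, hm⟩ := by
        have : (⟨m+1, by omega⟩ : Fin (k+1)) = Fin.succ ⟨m, hm⟩ := rfl
        rw [this, Equiv.swap_apply_right]
      rw [hsw]
      have : Fin.castSucc (⟨m, hm⟩ : Fin k) = ⟨m, by omega⟩ := rfl
      rw [this, ih (by omega)]
      simp only [cVal, if_neg h]

set_option maxHeartbeats 1000000 in
lemma Ftrunc_val (t : K) {k r : ℕ} (ts : ℕ → ℕ) (x : K) (w : ℕ → K)
    (xw : Fin (k+1) → K)
    (hxw : ∀ i : Fin (k + 1), xw i = if (i : ℕ) = 0 then x else w (i : ℕ))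
    (hinj : Function.Injective xw) :
    ∀ (m : ℕ) (hm : m ≤ k),
      Ftrunc t k xw m (Utrunc k r ts xw m) = ∏ i ∈ range m, factorF t r ts x w i := by
  intro m
  induction m with
  | zero =>
    intro _
    show (Finsupp.single xw 1) xw = _
    rw [Finsupp.single_eq_same]
    simp
  | succ m ih =>
    intro hm1
    have hm : m < k := by omega
    have hcs : Fin.castSucc (⟨m, hm⟩ : Fin k) = ⟨m, by omega⟩ := rfl
    have hsu : Fin.succ (⟨m, hm⟩ : Fin k) = ⟨m+1, by omega⟩ := rfl
    have hUm : Utrunc k r ts xw m ⟨m, by omega⟩ = cVal r ts x w m :=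
      Utrunc_pos ts x w xw hxw m (by omega)
    have hUm1 : Utrunc k r ts xw m ⟨m+1, by omega⟩ = w (m+1) := by
      rw [Utrunc_untouched r ts xw m ⟨m+1, by omega⟩ (by simp), hxw]
      rfl
    -- the "bad" tuple vanishes
    have hbad : Ftrunc t k xw m
        (Utrunc k r ts xw m ∘ (Equiv.swap (Fin.castSucc ⟨m, hm⟩) (Fin.succ ⟨m, hm⟩))) = 0 := by
      apply Ftrunc_vanish t xw m _ ⟨m+1, by omega⟩ (by simp)
      rw [Function.comp_apply, hsu, Equiv.swap_apply_right, hcs, hUm, ← hUm,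
        ← Utrunc_untouched r ts xw m ⟨m+1, by omega⟩ (by simp)]
      intro hEq
      have := Utrunc_inj r ts xw hinj m hEq
      simp [Fin.ext_iff] at this
    rw [Ftrunc_succ t xw hm, prod_range_succ, ← ih (by omega)]
    rw [Utrunc_succ r ts xw hm]
    by_cases h : inI r ts (m+1)
    · rw [if_pos h, TinvOp_apply, hbad, mul_zero, add_zero, hcs, hsu, hUm, hUm1]
      rw [factorF, if_pos h]
      ring
    · rw [if_neg h, TinvOp_apply, comp_swap_comp_swap]
      have h2 : (Utrunc k r ts xw m ∘
          (Equiv.swap (Fin.castSucc ⟨m, hm⟩) (Fin.succ ⟨m, hm⟩))) (Fin.succ ⟨m, hm⟩)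
          = cVal r ts x w m := by
        rw [Function.comp_apply, Equiv.swap_apply_right, hcs, hUm]
      have h3 : (Utrunc k r ts xw m ∘
          (Equiv.swap (Fin.castSucc ⟨m, hm⟩) (Fin.succ ⟨m, hm⟩))) (Fin.castSucc ⟨m, hm⟩)
          = w (m+1) := by
        rw [Function.comp_apply, Equiv.swap_apply_left, hsu, hUm1]
      rw [hbad, mul_zero, zero_add, h2, h3]
      rw [factorF, if_neg h]
      ring

section part2
variable (t : K) (k r : ℕ) (ts : ℕ → ℕ) (x : K) (w : ℕ → K)
variable (hr : 1 ≤ r)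
variable (hmono : ∀ u v : ℕ, 1 ≤ u → u < v → v ≤ r → ts u < ts v)
variable (h1 : 1 ≤ ts 1) (hk : ts r ≤ k) (htop : ts (r + 1) = k + 1)

include hmono h1 in
lemma ts_mono' : ∀ u v : ℕ, 1 ≤ u → u ≤ v → v ≤ r → ts u ≤ ts v := by
  intro u v hu huv hv
  rcases eq_or_lt_of_le huv with h | h
  · rw [h]
  · exact le_of_lt (hmono u v hu h hv)

include hmono h1 hk htop in
lemma ts_next_gt : ∀ v : ℕ, 1 ≤ v → v ≤ r → ts v < ts (v + 1) := by
  intro v hv hvr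
  rcases eq_or_lt_of_le hvr with h | h
  · subst h
    have : ts v ≤ k := hk
    omega
  · exact hmono v (v+1) hv (by omega) (by omega)

include hmono h1 in
lemma ts_ge_ts1 : ∀ u : ℕ, 1 ≤ u → u ≤ r → ts 1 ≤ ts u := by
  intro u hu hur
  exact ts_mono' r ts hmono h1 1 u le_rfl hu hur

include hmono h1 in
lemma cVal_lt_ts1 : ∀ m : ℕ, m < ts 1 → cVal r ts x w m = x := by
  intro m
  induction m with
  | zero => intro _; rfl
  | succ m ih =>
    intro hlt
    have hnot : ¬ inI r ts (m+1) := by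
      rintro ⟨u, hu, hts⟩
      rw [Finset.mem_Icc] at hu
      have := ts_ge_ts1 r ts hmono h1 u hu.1 hu.2
      omega
    show (if inI r ts (m+1) then w (m+1) else cVal r ts x w m) = x
    rw [if_neg hnot, ih (by omega)]

include hmono h1 in
lemma notinI_between : ∀ v m : ℕ, 1 ≤ v → v ≤ r → ts v ≤ m → m + 1 < ts (v+1) →
    ¬ inI r ts (m+1) := by
  rintro v m hv hvr hm hm1 ⟨u, hu, hts⟩
  rw [Finset.mem_Icc] at hu
  rcases le_or_gt u v with h | h
  · have := ts_mono' r ts hmono h1 u v hu.1 h hvr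
    omega
  · have hv1u : v + 1 ≤ u := h
    have := ts_mono' r ts hmono h1 (v+1) u (by omega) hv1u hu.2
    omega

include hmono h1 in
lemma cVal_between : ∀ v : ℕ, 1 ≤ v → v ≤ r → ∀ m : ℕ, ts v ≤ m → m < ts (v+1) →
    cVal r ts x w m = w (ts v) := by
  intro v hv hvr m
  induction m with
  | zero =>
    intro h0 _
    have := ts_ge_ts1 r ts hmono h1 v hv hvr
    omega
  | succ m ih =>
    intro hm hm1
    show (if inI r ts (m+1) then w (m+1) else cVal r ts x w m) = w (ts v)
    rcases eq_or_lt_of_le hm with heq | hlt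
    · rw [if_pos ⟨v, Finset.mem_Icc.mpr ⟨hv, hvr⟩, heq⟩]
      rw [← heq]
    · rw [if_neg (notinI_between r ts hmono h1 v m hv hvr (by omega) hm1),
        ih (by omega) (by omega)]
end part2

section part2b
variable (t : K) (k r : ℕ) (ts : ℕ → ℕ) (x : K) (w : ℕ → K)
variable (hr : 1 ≤ r)
variable (hmono : ∀ u v : ℕ, 1 ≤ u → u < v → v ≤ r → ts u < ts v)
variable (h1 : 1 ≤ ts 1) (hk : ts r ≤ k) (htop : ts (r + 1) = k + 1)

lemma prod_shift (g : ℕ → K) (a b : ℕ) :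
    ∏ i ∈ Ico a b, g (i+1) = ∏ j ∈ Icc (a+1) b, g j := by
  rw [← Finset.Ico_add_one_right_eq_Icc, prod_Ico_eq_prod_range, prod_Ico_eq_prod_range]
  rw [show b + 1 - (a + 1) = b - a by omega]
  exact Finset.prod_congr rfl (fun i _ => by rw [show a + i + 1 = a + 1 + i by omega])

include hmono h1 in
lemma factor_lt_ts1 : ∀ m : ℕ, m + 1 < ts 1 →
    factorF t r ts x w m = (t⁻¹ * x - w (m+1)) / (x - w (m+1)) := by
  intro m hm
  have hnot : ¬ inI r ts (m+1) := by
    rintro ⟨u, hu, hts⟩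
    rw [Finset.mem_Icc] at hu
    have := ts_ge_ts1 r ts hmono h1 u hu.1 hu.2
    omega
  rw [factorF, if_neg hnot, cVal_lt_ts1 r ts x w hmono h1 m (by omega)]

include hr hmono h1 in
lemma factor_at_ts1 :
    factorF t r ts x w (ts 1 - 1) = (1 - t⁻¹) * x / (x - w (ts 1)) := by
  have he : ts 1 - 1 + 1 = ts 1 := by omega
  rw [factorF, he, if_pos ⟨1, Finset.mem_Icc.mpr ⟨le_rfl, hr⟩, rfl⟩,
    cVal_lt_ts1 r ts x w hmono h1 (ts 1 - 1) (by omega)]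

include hmono h1 hk htop in
lemma factor_at_next (v : ℕ) (hv : 1 ≤ v) (hvr : v + 1 ≤ r) :
    factorF t r ts x w (ts (v+1) - 1)
      = (1 - t⁻¹) * w (ts v) / (w (ts v) - w (ts (v+1))) := by
  have hlt : ts v < ts (v+1) := ts_next_gt k r ts hmono h1 hk htop v hv (by omega)
  have hge : 1 ≤ ts v := ts_ge_ts1 r ts hmono h1 v hv (by omega) |>.trans' h1
  have he : ts (v+1) - 1 + 1 = ts (v+1) := by omega
  rw [factorF, he, if_pos ⟨v+1, Finset.mem_Icc.mpr ⟨by omega, hvr⟩, rfl⟩,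
    cVal_between r ts x w hmono h1 v hv (by omega) (ts (v+1) - 1) (by omega) (by omega)]

include hmono h1 in
lemma factor_between (v : ℕ) (hv : 1 ≤ v) (hvr : v ≤ r) (m : ℕ)
    (hm : ts v ≤ m) (hm1 : m + 1 < ts (v+1)) :
    factorF t r ts x w m = (t⁻¹ * w (ts v) - w (m+1)) / (w (ts v) - w (m+1)) := by
  rw [factorF, if_neg (notinI_between r ts hmono h1 v m hv hvr hm hm1),
    cVal_between r ts x w hmono h1 v hv hvr m hm (by omega)]
end part2b

section part2c
variable (t : K) (k r : ℕ) (ts : ℕ → ℕ) (x : K) (w : ℕ → K)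
variable (hr : 1 ≤ r)
variable (hmono : ∀ u v : ℕ, 1 ≤ u → u < v → v ≤ r → ts u < ts v)
variable (h1 : 1 ≤ ts 1) (hk : ts r ≤ k) (htop : ts (r + 1) = k + 1)

include hmono h1 hk htop in
lemma prod_split (v : ℕ) (hv : 1 ≤ v) (hvr : v ≤ r) :
    ∏ i ∈ range (ts (v+1) - 1), factorF t r ts x w i =
      ((∏ i ∈ range (ts v - 1), factorF t r ts x w i) * factorF t r ts x w (ts v - 1))
        * ∏ i ∈ Ico (ts v) (ts (v+1) - 1), factorF t r ts x w i := by
  have h2 : ts v < ts (v+1) := ts_next_gt k r ts hmono h1 hk htop v hv hvr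
  have hts1 : 1 ≤ ts v := h1.trans (ts_ge_ts1 r ts hmono h1 v hv hvr)
  have e1 : ∏ i ∈ range (ts v), factorF t r ts x w i
      = (∏ i ∈ range (ts v - 1), factorF t r ts x w i) * factorF t r ts x w (ts v - 1) := by
    have := prod_range_succ (factorF t r ts x w) (ts v - 1)
    rw [show ts v - 1 + 1 = ts v by omega] at this
    exact this
  rw [range_eq_Ico, ← prod_Ico_consecutive _ (Nat.zero_le (ts v)) (by omega : ts v ≤ ts (v+1) - 1),
    ← range_eq_Ico, e1]

include hr hmono h1 hk htop in
lemma prod_main : ∀ v : ℕ, 1 ≤ v → v ≤ r →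
    ∏ i ∈ range (ts (v+1) - 1), factorF t r ts x w i =
      ((1 - t⁻¹) * x / (x - w (ts 1)))
        * (∏ u ∈ Icc 1 (v - 1), (1 - t⁻¹) * w (ts u) / (w (ts u) - w (ts (u + 1))))
        * (∏ j ∈ Icc 1 (ts 1 - 1), (t⁻¹ * x - w j) / (x - w j))
        * (∏ u ∈ Icc 1 v, ∏ j ∈ Icc (ts u + 1) (ts (u + 1) - 1),
            (t⁻¹ * w (ts u) - w j) / (w (ts u) - w j)) := by
  intro v hv
  induction v, hv using Nat.le_induction with
  | base =>
    intro hvr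
    rw [prod_split t k r ts x w hmono h1 hk htop 1 le_rfl hvr]
    rw [factor_at_ts1 t r ts x w hr hmono h1]
    have e1 : ∏ i ∈ range (ts 1 - 1), factorF t r ts x w i
        = ∏ j ∈ Icc 1 (ts 1 - 1), (t⁻¹ * x - w j) / (x - w j) := by
      rw [Finset.prod_congr rfl (fun i hi => factor_lt_ts1 t r ts x w hmono h1 i
        (by rw [mem_range] at hi; omega)), range_eq_Ico,
        prod_shift (fun j => (t⁻¹ * x - w j) / (x - w j)) 0 (ts 1 - 1)]
    have e2 : ∏ i ∈ Ico (ts 1) (ts (1+1) - 1), factorF t r ts x w i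
        = ∏ j ∈ Icc (ts 1 + 1) (ts (1+1) - 1), (t⁻¹ * w (ts 1) - w j) / (w (ts 1) - w j) := by
      rw [Finset.prod_congr rfl (fun i hi => factor_between t r ts x w hmono h1 1 le_rfl hvr i
        (by rw [mem_Ico] at hi; omega) (by rw [mem_Ico] at hi; omega)),
        prod_shift (fun j => (t⁻¹ * w (ts 1) - w j) / (w (ts 1) - w j)) (ts 1) (ts (1+1) - 1)]
    rw [e1, e2]
    rw [show (1 : ℕ) - 1 = 0 by rfl, Finset.Icc_eq_empty (by omega : ¬ (1:ℕ) ≤ 0),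
      prod_empty, Finset.Icc_self, prod_singleton]
    ring
  | succ v hv ih =>
    intro hvr
    rw [prod_split t k r ts x w hmono h1 hk htop (v+1) (by omega) hvr,
      ih (by omega), factor_at_next t k r ts x w hmono h1 hk htop v hv hvr]
    have e3 : ∏ i ∈ Ico (ts (v+1)) (ts (v+1+1) - 1), factorF t r ts x w i
        = ∏ j ∈ Icc (ts (v+1) + 1) (ts (v+1+1) - 1),
            (t⁻¹ * w (ts (v+1)) - w j) / (w (ts (v+1)) - w j) := by
      rw [Finset.prod_congr rfl (fun i hi => factor_between t r ts x w hmono h1 (v+1)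
        (by omega) hvr i (by rw [mem_Ico] at hi; omega) (by rw [mem_Ico] at hi; omega)),
        prod_shift (fun j => (t⁻¹ * w (ts (v+1)) - w j) / (w (ts (v+1)) - w j))
          (ts (v+1)) (ts (v+1+1) - 1)]
    rw [e3]
    have hvv : v - 1 + 1 = v := by omega
    have e4 : ∏ u ∈ Icc 1 (v + 1 - 1), (1 - t⁻¹) * w (ts u) / (w (ts u) - w (ts (u + 1)))
        = (∏ u ∈ Icc 1 (v - 1), (1 - t⁻¹) * w (ts u) / (w (ts u) - w (ts (u + 1))))
          * ((1 - t⁻¹) * w (ts v) / (w (ts v) - w (ts (v + 1)))) := by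
      rw [show v + 1 - 1 = v - 1 + 1 by omega,
        Finset.prod_Icc_succ_top (by omega : 1 ≤ v - 1 + 1), hvv]
    have e5 : ∏ u ∈ Icc 1 (v + 1), ∏ j ∈ Icc (ts u + 1) (ts (u + 1) - 1),
          (t⁻¹ * w (ts u) - w j) / (w (ts u) - w j)
        = (∏ u ∈ Icc 1 v, ∏ j ∈ Icc (ts u + 1) (ts (u + 1) - 1),
            (t⁻¹ * w (ts u) - w j) / (w (ts u) - w j))
          * ∏ j ∈ Icc (ts (v+1) + 1) (ts (v+1+1) - 1),
              (t⁻¹ * w (ts (v+1)) - w j) / (w (ts (v+1)) - w j) := by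
      rw [Finset.prod_Icc_succ_top (by omega : 1 ≤ v + 1)]
    rw [e4, e5]
    ring
end part2c


theorem TinvComposite_coeff (t : K) (k r : ℕ) (ts : ℕ → ℕ) (x : K) (w : ℕ → K)
    (hr : 1 ≤ r)
    (hmono : ∀ u v : ℕ, 1 ≤ u → u < v → v ≤ r → ts u < ts v)
    (h1 : 1 ≤ ts 1) (hk : ts r ≤ k) (htop : ts (r + 1) = k + 1)
    (ht : t ≠ 0)
    (xw : Fin (k + 1) → K)
    (hxw : ∀ i : Fin (k + 1), xw i = if (i : ℕ) = 0 then x else w (i : ℕ))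
    (hinj : Function.Injective xw) (hne : ∀ i, xw i ≠ 0) :
    (TinvComposite t k (Finsupp.single xw 1)) (vTuple k r ts xw) =
      ((1 - t⁻¹) * x / (x - w (ts 1)))
        * (∏ u ∈ Icc 1 (r - 1), (1 - t⁻¹) * w (ts u) / (w (ts u) - w (ts (u + 1))))
        * (∏ j ∈ Icc 1 (ts 1 - 1), (t⁻¹ * x - w j) / (x - w j))
        * (∏ u ∈ Icc 1 r, ∏ j ∈ Icc (ts u + 1) (ts (u + 1) - 1),
            (t⁻¹ * w (ts u) - w j) / (w (ts u) - w j)) := by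

  have hb1 : TinvComposite t k (Finsupp.single xw (1:K)) = Ftrunc t k xw k := by
    rw [Ftrunc, List.take_of_length_le (by simp)]
    rfl
  have hb2 : vTuple k r ts xw = Utrunc k r ts xw k := by
    rw [Utrunc, List.take_of_length_le (by simp)]
    rfl
  rw [hb1, hb2, Ftrunc_val t ts x w xw hxw hinj k le_rfl]
  have hmain := prod_main t k r ts x w hr hmono h1 hk htop r hr le_rfl
  rw [htop, show k + 1 - 1 = k by omega] at hmain
  exact hmain
end
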